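/- Let b ≥ 1 be an integer and let p be a sensor-deployment distribution. For each n let X_1, …, X_n be i.i.d. with P(X_j = k) = p_k, let N_k be the count of samples equal to k, and let e_n = P( ¬(0 < N_0 < N_1 < … < N_{2b}) ). Then the error exponent satisfies lim_{n→∞} (1/n) · log₂ e_n = log₂(1 − d_min(p)²). -/

import Mathlib

open Finset Real MeasureTheory ProbabilityTheory Filter

/-- The "gap" vector: `d 0 = √p₀`, `d i = √pᵢ - √p_{i-1}` for `i ≥ 1`. -/
noncomputable def dvec (p : ℕ → ℝ) (i : ℕ) : ℝ :=
  if i = 0 then Real.sqrt (p 0) else Real.sqrt (p i) - Real.sqrt (p (i - 1))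

/-- `d_min(p) = min_{0 ≤ i ≤ 2b} d_i(p)`. -/
noncomputable def dmin (b : ℕ) (p : ℕ → ℝ) : ℝ :=
  (Finset.range (2 * b + 1)).inf' (Finset.nonempty_range_iff.mpr (by omega)) (dvec p)

/-- A sensor-deployment distribution: `0 < p₀ < p₁ < ⋯ < p_{2b}` and `∑ pᵢ = 1`. -/
def IsSensorDist (b : ℕ) (p : ℕ → ℝ) : Prop :=
  0 < p 0 ∧ (∀ i, i < 2 * b → p i < p (i + 1)) ∧ ∑ i ∈ Finset.range (2 * b + 1), p i = 1

namespace DetExp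

/-- Number of coordinates of `f` in class `t`. -/
def cnt {n : ℕ} (f : Fin n → Fin 3) (t : Fin 3) : ℕ := #(univ.filter fun j => f j = t)

lemma prod_comp_cnt {M : Type*} [CommMonoid M] {n : ℕ} (f : Fin n → Fin 3) (w : Fin 3 → M) :
    ∏ j : Fin n, w (f j) = ∏ t : Fin 3, w t ^ cnt f t := by
  rw [← Finset.prod_fiberwise_of_maps_to (fun i _ => Finset.mem_univ (f i)) (fun j => w (f j))]
  refine Finset.prod_congr rfl fun t _ => ?_
  have h : ∀ j ∈ univ.filter (fun i => f i = t), w (f j) = w t := by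
    intro j hj; simp only [Finset.mem_filter] at hj; rw [hj.2]
  rw [Finset.prod_congr rfl h, Finset.prod_const]
  rfl

lemma cnt_sum {n : ℕ} (f : Fin n → Fin 3) : cnt f 0 + cnt f 1 + cnt f 2 = n := by
  have h := Finset.card_eq_sum_card_fiberwise (f := f) (s := univ) (t := univ)
    (fun x _ => Finset.mem_univ (f x))
  simp only [Finset.card_univ, Fintype.card_fin] at h
  rw [Fin.sum_univ_three] at h
  simp only [cnt]
  omega

lemma cnt_le {n : ℕ} (f : Fin n → Fin 3) (t : Fin 3) : cnt f t ≤ n := by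
  have := Finset.card_filter_le (univ : Finset (Fin n)) (fun j => f j = t)
  simpa [Finset.card_univ, cnt] using this

lemma card_filter_val {n : ℕ} (P : ℕ → Prop) [DecidablePred P] :
    #(univ.filter fun j : Fin n => P j.val) = #((Finset.range n).filter P) := by
  refine Finset.card_bij (fun j _ => j.val) ?_ ?_ ?_
  · intro j hj
    simp only [Finset.mem_filter, Finset.mem_univ, true_and] at hj
    simp [Finset.mem_filter, Finset.mem_range, j.isLt, hj]
  · intro a ha b hb hab
    exact Fin.ext hab
  · intro j hj
    simp only [Finset.mem_filter, Finset.mem_range] at hj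
    exact ⟨⟨j, hj.1⟩, by simp [hj.2], rfl⟩

/-- Sum over all functions of a product of weights. -/
lemma sum_prod_all {n : ℕ} (w : Fin 3 → ℝ) :
    ∑ f : Fin n → Fin 3, ∏ j, w (f j) = (w 0 + w 1 + w 2) ^ n := by
  classical
  have h := Finset.prod_univ_sum (fun _ : Fin n => (univ : Finset (Fin 3))) (fun _ t => w t)
  rw [Fintype.piFinset_univ] at h
  rw [← h]
  rw [Finset.prod_congr rfl (fun j _ => Fin.sum_univ_three w), Finset.prod_const]
  simp

/-- Counting functions with prescribed fiber sizes. -/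
lemma count_formula {n a b : ℕ} (hab : a + b ≤ n) :
    #(univ.filter fun f : Fin n → Fin 3 => cnt f 1 = a ∧ cnt f 2 = b)
      = n.choose a * (n - a).choose b := by
  classical
  have hfin3 : ∀ t : Fin 3, t ≠ 1 → t ≠ 2 → t = 0 := by decide
  rw [Finset.card_eq_sum_card_fiberwise
    (f := fun f : Fin n → Fin 3 => univ.filter fun j => f j = 1)
    (t := Finset.powersetCard a univ) ?hmaps]
  case hmaps =>
    intro f hf
    simp only [Finset.mem_coe, Finset.mem_filter, Finset.mem_univ, true_and] at hf
    simp [Finset.mem_powersetCard, ← hf.1, cnt]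
  have hcard : ∀ A ∈ Finset.powersetCard a univ,
      #(((univ.filter fun f : Fin n → Fin 3 => cnt f 1 = a ∧ cnt f 2 = b)).filter
          fun f => (univ.filter fun j => f j = 1) = A) = (n - a).choose b := by
    intro A hA
    simp only [Finset.mem_powersetCard] at hA
    have hAcard : #A = a := hA.2
    have hcompl : n - a = #(Aᶜ) := by rw [Finset.card_compl, Fintype.card_fin, hAcard]
    rw [hcompl, ← Finset.card_powersetCard b Aᶜ]
    refine Finset.card_bij' (fun f _ => univ.filter fun j => f j = 2)
      (fun B _ => fun j => if j ∈ A then 1 else if j ∈ B then 2 else 0) ?_ ?_ ?_ ?_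
    · intro f hf
      simp only [Finset.mem_filter, Finset.mem_univ, true_and] at hf
      obtain ⟨⟨h1, h2⟩, hfib⟩ := hf
      simp only [Finset.mem_powersetCard]
      constructor
      · intro j hj
        simp only [Finset.mem_filter, Finset.mem_univ, true_and] at hj
        simp only [Finset.mem_compl, ← hfib, Finset.mem_filter, Finset.mem_univ, true_and]
        rw [hj]; decide
      · exact h2
    · intro B hB
      simp only [Finset.mem_powersetCard] at hB
      obtain ⟨hBsub, hBcard⟩ := hB
      have hfib1 : (univ.filter fun j =>
          (if j ∈ A then (1 : Fin 3) else if j ∈ B then 2 else 0) = 1) = A := by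
        ext j
        simp only [Finset.mem_filter, Finset.mem_univ, true_and]
        by_cases hjA : j ∈ A
        · simp [hjA]
        · simp only [hjA, if_false, iff_false]
          by_cases hjB : j ∈ B <;> simp [hjB]
      have hfib2 : (univ.filter fun j =>
          (if j ∈ A then (1 : Fin 3) else if j ∈ B then 2 else 0) = 2) = B := by
        ext j
        simp only [Finset.mem_filter, Finset.mem_univ, true_and]
        by_cases hjA : j ∈ A
        · have hnB : j ∉ B := fun hjB => by simpa [hjA] using hBsub hjB
          simp [hjA, hnB]
        · by_cases hjB : j ∈ B <;> simp [hjA, hjB]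
      simp only [Finset.mem_filter, Finset.mem_univ, true_and]
      refine ⟨⟨?_, ?_⟩, hfib1⟩
      · rw [cnt, hfib1, hAcard]
      · rw [cnt, hfib2, hBcard]
    · intro f hf
      simp only [Finset.mem_filter, Finset.mem_univ, true_and] at hf
      obtain ⟨⟨h1, h2⟩, hfib⟩ := hf
      funext j
      by_cases hjA : j ∈ A
      · have hfj : f j = 1 := by
          have h' := hjA
          rw [← hfib] at h'
          simpa using h'
        simp [hjA, hfj]
      · have hj1 : f j ≠ 1 := fun h => hjA (by rw [← hfib]; simp [h])
        by_cases hj2 : f j = 2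
        · simp [hjA, hj2]
        · simp [hjA, hj2, hfin3 _ hj1 hj2]
    · intro B hB
      simp only [Finset.mem_powersetCard] at hB
      ext j
      simp only [Finset.mem_filter, Finset.mem_univ, true_and]
      by_cases hjA : j ∈ A
      · have hnB : j ∉ B := fun hjB => by simpa [hjA] using hB.1 hjB
        simp [hjA, hnB]
      · by_cases hjB : j ∈ B <;> simp [hjA, hjB]
  rw [Finset.sum_congr rfl hcard, Finset.sum_const, Finset.card_powersetCard,
    Finset.card_univ, Fintype.card_fin, smul_eq_mul]

lemma fact_aux1 (j d : ℕ) : (Nat.factorial (j + d)) ≤ (Nat.factorial j) * (j + d) ^ d := by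
  induction d with
  | zero => simp
  | succ d ih =>
      have h1 : (Nat.factorial (j + (d + 1))) = (j + d + 1) * (Nat.factorial (j + d)) := by
        rw [show j + (d + 1) = (j + d) + 1 by omega, Nat.factorial_succ]
      calc (Nat.factorial (j + (d + 1))) = (j + d + 1) * (Nat.factorial (j + d)) := h1
        _ ≤ (j + d + 1) * ((Nat.factorial j) * (j + d) ^ d) := Nat.mul_le_mul_left _ ih
        _ ≤ (j + d + 1) * ((Nat.factorial j) * (j + d + 1) ^ d) := by
            have : (j + d) ^ d ≤ (j + d + 1) ^ d := Nat.pow_le_pow_left (by omega) d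
            exact Nat.mul_le_mul_left _ (Nat.mul_le_mul_left _ this)
        _ = (Nat.factorial j) * (j + (d + 1)) ^ (d + 1) := by
            rw [show j + (d + 1) = (j + d) + 1 by omega, pow_succ]
            ring

lemma fact_key (l j : ℕ) : (Nat.factorial l) * l ^ j ≤ (Nat.factorial j) * l ^ l := by
  rcases le_or_gt l j with h | h
  · obtain ⟨d, rfl⟩ := Nat.exists_eq_add_of_le h
    have h1 : (Nat.factorial l) * l ^ d ≤ (Nat.factorial (l + d)) :=
      le_trans (Nat.mul_le_mul_left _ (Nat.pow_le_pow_left (by omega) d))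
        Nat.factorial_mul_pow_le_factorial
    calc (Nat.factorial l) * l ^ (l + d) = (Nat.factorial l) * l ^ d * l ^ l := by rw [pow_add]; ring
      _ ≤ (Nat.factorial (l + d)) * l ^ l := Nat.mul_le_mul_right _ h1
  · obtain ⟨d, rfl⟩ := Nat.exists_eq_add_of_le h.le
    calc (Nat.factorial (j + d)) * (j + d) ^ j ≤ ((Nat.factorial j) * (j + d) ^ d) * (j + d) ^ j :=
          Nat.mul_le_mul_right _ (fact_aux1 j d)
      _ = (Nat.factorial j) * (j + d) ^ (j + d) := by rw [pow_add]; ring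

/-- factorial identity for the double-choose count. -/
lemma Nfact {n a b : ℕ} (hab : a + b ≤ n) :
    n.choose a * (n - a).choose b * ((Nat.factorial a) * (Nat.factorial b) * (Nat.factorial (n - a - b))) = (Nat.factorial n) := by
  have h1 : n.choose a * (Nat.factorial a) * (Nat.factorial (n - a)) = (Nat.factorial n) :=
    Nat.choose_mul_factorial_mul_factorial (by omega)
  have h2 : (n - a).choose b * (Nat.factorial b) * (Nat.factorial (n - a - b)) = (Nat.factorial (n - a)) := by
    exact Nat.choose_mul_factorial_mul_factorial (by omega)
  calc n.choose a * (n - a).choose b * ((Nat.factorial a) * (Nat.factorial b) * (Nat.factorial (n - a - b)))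
      = (n.choose a * (Nat.factorial a)) * ((n - a).choose b * (Nat.factorial b) * (Nat.factorial (n - a - b))) := by ring
    _ = (n.choose a * (Nat.factorial a)) * (Nat.factorial (n - a)) := by rw [h2]
    _ = (Nat.factorial n) := by rw [← h1]

/-- Core ℕ inequality: the (k,k) term dominates each (a,b) term. -/
lemma main_nat_ineq {n k a b : ℕ} (h2k : 2 * k ≤ n) (hab : a + b ≤ n) :
    (n.choose a * (n - a).choose b) * (k ^ a * k ^ b * (n - 2 * k) ^ (n - a - b))
      ≤ (n.choose k * (n - k).choose k) * (k ^ k * k ^ k * (n - 2 * k) ^ (n - 2 * k)) := by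
  set m := n - 2 * k with hm
  set c := n - a - b with hc
  have hD : 0 < (Nat.factorial a) * (Nat.factorial b) * (Nat.factorial c) * ((Nat.factorial k) * (Nat.factorial k) * (Nat.factorial m)) := by positivity
  refine Nat.le_of_mul_le_mul_right ?_ hD
  have hNab : n.choose a * (n - a).choose b * ((Nat.factorial a) * (Nat.factorial b) * (Nat.factorial c)) = (Nat.factorial n) := Nfact hab
  have hNkk : n.choose k * (n - k).choose k * ((Nat.factorial k) * (Nat.factorial k) * (Nat.factorial m)) = (Nat.factorial n) := by
    have := Nfact (n := n) (a := k) (b := k) (by omega)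
    rwa [show n - k - k = m by omega] at this
  have e1 : (n.choose a * (n - a).choose b) * (k ^ a * k ^ b * m ^ c)
        * ((Nat.factorial a) * (Nat.factorial b) * (Nat.factorial c) * ((Nat.factorial k) * (Nat.factorial k) * (Nat.factorial m)))
      = (Nat.factorial n) * (((Nat.factorial k) * k ^ a) * ((Nat.factorial k) * k ^ b) * ((Nat.factorial m) * m ^ c)) := by
    rw [← hNab]; ring
  have e2 : (n.choose k * (n - k).choose k) * (k ^ k * k ^ k * m ^ m)
        * ((Nat.factorial a) * (Nat.factorial b) * (Nat.factorial c) * ((Nat.factorial k) * (Nat.factorial k) * (Nat.factorial m)))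
      = (Nat.factorial n) * (((Nat.factorial a) * k ^ k) * ((Nat.factorial b) * k ^ k) * ((Nat.factorial c) * m ^ m)) := by
    rw [← hNkk]; ring
  rw [e1, e2]
  exact Nat.mul_le_mul_left _
    (Nat.mul_le_mul (Nat.mul_le_mul (fact_key k a) (fact_key k b)) (fact_key m c))

lemma type_lower {n k : ℕ} (hn : 0 < n) (h2k : 2 * k ≤ n) :
    (1 : ℝ) ≤ ((n : ℝ) + 1) ^ 2 * (((n.choose k * (n - k).choose k : ℕ) : ℝ) *
      (((k : ℝ) / n) ^ k * ((k : ℝ) / n) ^ k * (((n - 2 * k : ℕ) : ℝ) / n) ^ (n - 2 * k))) := by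
  classical
  have hn0 : (n : ℝ) ≠ 0 := Nat.cast_ne_zero.mpr hn.ne'
  set m := n - 2 * k with hm
  set w : Fin 3 → ℝ := fun t => if t = 0 then (m : ℝ) / n else (k : ℝ) / n with hw
  have hw0 : w 0 = (m : ℝ) / n := if_pos rfl
  have hw1 : w 1 = (k : ℝ) / n := if_neg (by decide)
  have hw2 : w 2 = (k : ℝ) / n := if_neg (by decide)
  have hmk : m + k + k = n := by omega
  have hsum1 : ∑ f : Fin n → Fin 3, ∏ j, w (f j) = 1 := by
    rw [sum_prod_all, hw0, hw1, hw2]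
    have h1 : (m : ℝ) / n + (k : ℝ) / n + (k : ℝ) / n = 1 := by
      rw [← add_div, ← add_div]
      rw [show (m : ℝ) + k + k = ((m + k + k : ℕ) : ℝ) by push_cast; ring, hmk]
      exact div_self hn0
    rw [h1, one_pow]
  have key : ∀ a b c : ℕ, a + b + c = n →
      ((k : ℝ) / n) ^ a * ((k : ℝ) / n) ^ b * ((m : ℝ) / n) ^ c
        = ((k ^ a * k ^ b * m ^ c : ℕ) : ℝ) / (n : ℝ) ^ n := by
    intro a b c habc
    have hnn : (n : ℝ) ^ a * (n : ℝ) ^ b * (n : ℝ) ^ c = (n : ℝ) ^ n := by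
      rw [← pow_add, ← pow_add, habc]
    push_cast
    rw [div_pow, div_pow, div_pow, div_mul_div_comm, div_mul_div_comm, hnn]
  set T : ℝ := ((n.choose k * (n - k).choose k : ℕ) : ℝ) *
      (((k : ℝ) / n) ^ k * ((k : ℝ) / n) ^ k * ((m : ℝ) / n) ^ m) with hT
  have hT' : T = (((n.choose k * (n - k).choose k) * (k ^ k * k ^ k * m ^ m) : ℕ) : ℝ)
      / (n : ℝ) ^ n := by
    rw [hT, key k k m (by omega)]
    push_cast; ring
  have hfiber : ∀ a b : ℕ, a + b ≤ n →
      ∑ f ∈ univ.filter (fun f : Fin n → Fin 3 => (cnt f 1, cnt f 2) = (a, b)), ∏ j, w (f j)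
        = (((n.choose a * (n - a).choose b) * (k ^ a * k ^ b * m ^ (n - a - b)) : ℕ) : ℝ)
            / (n : ℝ) ^ n := by
    intro a b hab
    have hconst : ∀ f ∈ univ.filter (fun f : Fin n → Fin 3 => (cnt f 1, cnt f 2) = (a, b)),
        ∏ j, w (f j) = ((k : ℝ) / n) ^ a * ((k : ℝ) / n) ^ b * ((m : ℝ) / n) ^ (n - a - b) := by
      intro f hf
      simp only [Finset.mem_filter, Finset.mem_univ, true_and, Prod.mk.injEq] at hf
      rw [prod_comp_cnt, Fin.prod_univ_three]
      have h0 : cnt f 0 = n - a - b := by have := cnt_sum f; omega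
      rw [h0, hf.1, hf.2, hw0, hw1, hw2]
      ring
    rw [Finset.sum_congr rfl hconst, Finset.sum_const]
    have hfilter : (univ.filter fun f : Fin n → Fin 3 => (cnt f 1, cnt f 2) = (a, b))
        = univ.filter fun f => cnt f 1 = a ∧ cnt f 2 = b := by
      apply Finset.filter_congr; intro f _; simp [Prod.ext_iff]
    rw [hfilter, count_formula hab, key a b (n - a - b) (by omega), nsmul_eq_mul]
    push_cast; ring
  have hmaps : ∀ f ∈ (univ : Finset (Fin n → Fin 3)),
      (cnt f 1, cnt f 2) ∈ Finset.range (n + 1) ×ˢ Finset.range (n + 1) := by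
    intro f _
    simp [Finset.mem_product, Finset.mem_range, Nat.lt_succ_iff, cnt_le]
  have hsplit := Finset.sum_fiberwise_of_maps_to hmaps (fun f => ∏ j, w (f j))
  have hone : ∑ ab ∈ Finset.range (n + 1) ×ˢ Finset.range (n + 1),
      (∑ f ∈ univ.filter (fun f : Fin n → Fin 3 => (cnt f 1, cnt f 2) = ab),
        ∏ j, w (f j)) = 1 := by
    rw [hsplit, hsum1]
  have hTnonneg : (0 : ℝ) ≤ T := by
    rw [hT]; positivity
  have hterm : ∀ ab ∈ Finset.range (n + 1) ×ˢ Finset.range (n + 1),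
      (∑ f ∈ univ.filter (fun f : Fin n → Fin 3 => (cnt f 1, cnt f 2) = ab),
        ∏ j, w (f j)) ≤ T := by
    rintro ⟨a, b⟩ _
    by_cases hab : a + b ≤ n
    · rw [hfiber a b hab, hT']
      have hnum := main_nat_ineq (n := n) (k := k) (a := a) (b := b) h2k hab
      rw [← hm] at hnum
      have hc : (((n.choose a * (n - a).choose b) * (k ^ a * k ^ b * m ^ (n - a - b)) : ℕ) : ℝ)
          ≤ (((n.choose k * (n - k).choose k) * (k ^ k * k ^ k * m ^ m) : ℕ) : ℝ) := by
        exact_mod_cast hnum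
      gcongr
    · have hempty : (univ.filter fun f : Fin n → Fin 3 => (cnt f 1, cnt f 2) = (a, b)) = ∅ := by
        rw [Finset.filter_eq_empty_iff]
        intro f _
        simp only [Prod.mk.injEq, not_and]
        intro h1 h2
        exact absurd (by rw [← h1, ← h2]; have := cnt_sum f; omega) hab
      rw [hempty, Finset.sum_empty]
      exact hTnonneg
  have hsum_le := Finset.sum_le_card_nsmul _ _ T hterm
  rw [hone] at hsum_le
  have hcard : #(Finset.range (n + 1) ×ˢ Finset.range (n + 1)) = (n + 1) * (n + 1) := by
    simp [Finset.card_product]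
  rw [hcard, nsmul_eq_mul] at hsum_le
  calc (1 : ℝ) ≤ (((n + 1) * (n + 1) : ℕ) : ℝ) * T := hsum_le
    _ = ((n : ℝ) + 1) ^ 2 * T := by push_cast; ring

/-- Real multinomial lower bound. -/
lemma multinomial_lower {n k : ℕ} (hn : 0 < n) (hk : 1 ≤ k) (h2k1 : 2 * k < n)
    {p1 p2 q : ℝ} (hp1 : 0 < p1) (hp2 : 0 < p2) (hq : 0 < q) :
    (((n : ℝ) + 1)⁻¹) ^ 2 * ((p1 * n / k) ^ k * (p2 * n / k) ^ k
        * (q * n / ((n - 2 * k : ℕ) : ℝ)) ^ (n - 2 * k))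
      ≤ ((n.choose k * (n - k).choose k : ℕ) : ℝ) * (p1 ^ k * p2 ^ k * q ^ (n - 2 * k)) := by
  have hn0 : (n : ℝ) ≠ 0 := Nat.cast_ne_zero.mpr hn.ne'
  have hk0 : (k : ℝ) ≠ 0 := Nat.cast_ne_zero.mpr (by omega)
  set m := n - 2 * k with hm
  have hm0 : (m : ℝ) ≠ 0 := Nat.cast_ne_zero.mpr (by omega)
  have hmpos : (0 : ℝ) < (m : ℝ) := by
    have : 0 < m := by omega
    exact_mod_cast this
  have h1 := type_lower hn (le_of_lt h2k1)
  rw [← hm] at h1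
  set B : ℝ := ((n.choose k * (n - k).choose k : ℕ) : ℝ) *
      (((k : ℝ) / n) ^ k * ((k : ℝ) / n) ^ k * ((m : ℝ) / n) ^ m) with hB
  have hBnonneg : (0 : ℝ) ≤ B := by positivity
  have hc2 : (0 : ℝ) < ((n : ℝ) + 1) ^ 2 := by positivity
  have hBlow : (((n : ℝ) + 1)⁻¹) ^ 2 ≤ B := by
    rw [inv_pow, inv_eq_one_div]
    rw [div_le_iff₀ hc2]
    linarith [h1]
  have hA1 : ((k : ℝ) / n) ^ k * (p1 * n / k) ^ k = p1 ^ k := by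
    rw [← mul_pow]; congr 1; field_simp
  have hA2 : ((k : ℝ) / n) ^ k * (p2 * n / k) ^ k = p2 ^ k := by
    rw [← mul_pow]; congr 1; field_simp
  have hA3 : ((m : ℝ) / n) ^ m * (q * n / (m : ℝ)) ^ m = q ^ m := by
    rw [← mul_pow]; congr 1; field_simp
  have hLnonneg : (0 : ℝ) ≤ (p1 * n / k) ^ k * (p2 * n / k) ^ k * (q * n / (m : ℝ)) ^ m := by
    positivity
  calc (((n : ℝ) + 1)⁻¹) ^ 2 * ((p1 * n / k) ^ k * (p2 * n / k) ^ k
        * (q * n / ((m : ℕ) : ℝ)) ^ m)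
      ≤ B * ((p1 * n / k) ^ k * (p2 * n / k) ^ k * (q * n / (m : ℝ)) ^ m) :=
        mul_le_mul_of_nonneg_right hBlow hLnonneg
    _ = ((n.choose k * (n - k).choose k : ℕ) : ℝ) * (p1 ^ k * p2 ^ k * q ^ m) := by
        rw [← hA1, ← hA2, ← hA3, hB]; ring

lemma chernoff_term {x y : ℝ} (hx : 0 ≤ x) (hxy : x ≤ y) {a b : ℕ} (hba : b ≤ a) :
    x ^ a * y ^ b ≤ Real.sqrt (x * y) ^ a * Real.sqrt (x * y) ^ b := by
  have hy : 0 ≤ y := le_trans hx hxy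
  have hs : Real.sqrt (x * y) ^ 2 = x * y := Real.sq_sqrt (by positivity)
  have hxs : x ≤ Real.sqrt (x * y) := by
    nth_rewrite 1 [show x = Real.sqrt (x * x) from (Real.sqrt_mul_self hx).symm]
    exact Real.sqrt_le_sqrt (by nlinarith)
  obtain ⟨d, rfl⟩ : ∃ d, a = b + d := ⟨a - b, by omega⟩
  calc x ^ (b + d) * y ^ b = (x * y) ^ b * x ^ d := by rw [pow_add, mul_pow]; ring
    _ ≤ (x * y) ^ b * Real.sqrt (x * y) ^ d := by
        gcongr

    _ = Real.sqrt (x * y) ^ (b + d) * Real.sqrt (x * y) ^ b := by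
        nth_rewrite 1 [← hs]
        rw [← pow_mul, ← pow_add, ← pow_add]
        congr 1
        omega

lemma sum_pair_le {n : ℕ} (r : Fin 3 → ℝ) (hr0 : ∀ t, 0 ≤ r t) (h12 : r 1 ≤ r 2) :
    ∑ f ∈ univ.filter (fun f : Fin n → Fin 3 => cnt f 2 ≤ cnt f 1), ∏ j, r (f j)
      ≤ (r 0 + 2 * Real.sqrt (r 1 * r 2)) ^ n := by
  classical
  set s := Real.sqrt (r 1 * r 2) with hs
  set w : Fin 3 → ℝ := fun t => if t = 0 then r 0 else s with hw
  have hw0 : w 0 = r 0 := if_pos rfl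
  have hw1 : w 1 = s := if_neg (by decide)
  have hw2 : w 2 = s := if_neg (by decide)
  have hsnn : 0 ≤ s := Real.sqrt_nonneg _
  have hwnn : ∀ t, 0 ≤ w t := by
    intro t
    rw [hw]
    dsimp only
    split_ifs
    · exact hr0 0
    · exact hsnn
  have step1 : ∀ f ∈ univ.filter (fun f : Fin n → Fin 3 => cnt f 2 ≤ cnt f 1),
      ∏ j, r (f j) ≤ ∏ j, w (f j) := by
    intro f hf
    simp only [Finset.mem_filter, Finset.mem_univ, true_and] at hf
    rw [prod_comp_cnt f r, prod_comp_cnt f w, Fin.prod_univ_three, Fin.prod_univ_three,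
      hw0, hw1, hw2]
    calc r 0 ^ cnt f 0 * r 1 ^ cnt f 1 * r 2 ^ cnt f 2
        = r 0 ^ cnt f 0 * (r 1 ^ cnt f 1 * r 2 ^ cnt f 2) := by ring
      _ ≤ r 0 ^ cnt f 0 * (s ^ cnt f 1 * s ^ cnt f 2) := by
          refine mul_le_mul_of_nonneg_left ?_ (pow_nonneg (hr0 0) _)
          rw [hs]
          exact chernoff_term (hr0 1) h12 hf
      _ = r 0 ^ cnt f 0 * s ^ cnt f 1 * s ^ cnt f 2 := by ring
  calc ∑ f ∈ univ.filter (fun f : Fin n → Fin 3 => cnt f 2 ≤ cnt f 1), ∏ j, r (f j)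
      ≤ ∑ f ∈ univ.filter (fun f : Fin n → Fin 3 => cnt f 2 ≤ cnt f 1), ∏ j, w (f j) :=
        Finset.sum_le_sum step1
    _ ≤ ∑ f : Fin n → Fin 3, ∏ j, w (f j) :=
        Finset.sum_le_sum_of_subset_of_nonneg (Finset.filter_subset _ _)
          (fun f _ _ => Finset.prod_nonneg fun j _ => hwnn _)
    _ = (w 0 + w 1 + w 2) ^ n := sum_prod_all w
    _ = (r 0 + 2 * s) ^ n := by rw [hw0, hw1, hw2]; ring_nf

lemma sum_zero_eq {n : ℕ} (r : Fin 3 → ℝ) :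
    ∑ f ∈ univ.filter (fun f : Fin n → Fin 3 => cnt f 1 = 0), ∏ j, r (f j)
      = (r 0 + r 2) ^ n := by
  classical
  set w : Fin 3 → ℝ := fun t => if t = 1 then 0 else r t with hw
  have hw0 : w 0 = r 0 := if_neg (by decide)
  have hw1 : w 1 = 0 := if_pos rfl
  have hw2 : w 2 = r 2 := if_neg (by decide)
  have hall := sum_prod_all (n := n) w
  rw [← Finset.sum_filter_add_sum_filter_not univ (fun f : Fin n → Fin 3 => cnt f 1 = 0)] at hall
  have hnot : ∀ f ∈ univ.filter (fun f : Fin n → Fin 3 => ¬ cnt f 1 = 0),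
      ∏ j, w (f j) = 0 := by
    intro f hf
    simp only [Finset.mem_filter, Finset.mem_univ, true_and] at hf
    have hne : (univ.filter fun j : Fin n => f j = 1).Nonempty := by
      rw [← Finset.card_pos]
      have h2 : cnt f 1 ≠ 0 := hf
      unfold cnt at h2
      omega
    obtain ⟨j, hj⟩ := hne
    simp only [Finset.mem_filter] at hj
    exact Finset.prod_eq_zero (Finset.mem_univ j) (by rw [hj.2, hw1])
  rw [Finset.sum_congr rfl hnot, Finset.sum_const_zero, add_zero] at hall
  have heq : ∀ f ∈ univ.filter (fun f : Fin n → Fin 3 => cnt f 1 = 0),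
      ∏ j, w (f j) = ∏ j, r (f j) := by
    intro f hf
    simp only [Finset.mem_filter, Finset.mem_univ, true_and] at hf
    have hempty : (univ.filter fun j : Fin n => f j = 1) = ∅ := Finset.card_eq_zero.mp hf
    refine Finset.prod_congr rfl fun j _ => ?_
    have hj1 : f j ≠ 1 := by
      intro h
      have hmem : j ∈ (univ.filter fun j : Fin n => f j = 1) := by simp [h]
      rw [hempty] at hmem
      exact absurd hmem (Finset.notMem_empty j)
    rw [hw]
    dsimp only
    rw [if_neg hj1]
  rw [← Finset.sum_congr rfl heq, hall, hw0, hw1, hw2, add_zero]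

section Meas

variable {Ω : Type*} [MeasurableSpace Ω] {μ : Measure Ω} [IsProbabilityMeasure μ] {X : ℕ → Ω → ℕ}

lemma meas_cyl (hXindep : iIndepFun X μ)
    (c : ℕ → Fin 3) (r : Fin 3 → ℝ) (hr0 : ∀ t, 0 ≤ r t)
    (hr : ∀ j t, μ {ω | c (X j ω) = t} = ENNReal.ofReal (r t))
    (n : ℕ) (f : Fin n → Fin 3) :
    μ {ω | ∀ j : Fin n, c (X j ω) = f j} = ENNReal.ofReal (∏ j, r (f j)) := by
  classical
  set g : ℕ → Fin 3 := fun j => if h : j < n then f ⟨j, h⟩ else 0 with hg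
  have hset : {ω | ∀ j : Fin n, c (X j ω) = f j}
      = ⋂ j ∈ Finset.range n, X j ⁻¹' (c ⁻¹' {g j}) := by
    ext ω
    simp only [Set.mem_setOf_eq, Set.mem_iInter, Set.mem_preimage, Set.mem_singleton_iff,
      Finset.mem_range]
    constructor
    · intro h j hj
      rw [hg]; simp only [hj, dif_pos]; exact h ⟨j, hj⟩
    · intro h j
      have h2 := h j.val j.isLt
      rw [hg] at h2
      simp only [j.isLt, dif_pos] at h2
      simpa using h2
  have hmeasset : ∀ i ∈ Finset.range n, MeasurableSet (c ⁻¹' {g i} : Set ℕ) :=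
    fun i _ => (Set.to_countable _).measurableSet
  rw [hset, hXindep.measure_inter_preimage_eq_mul (Finset.range n) hmeasset]
  have hfac : ∀ j ∈ Finset.range n, μ (X j ⁻¹' (c ⁻¹' {g j})) = ENNReal.ofReal (r (g j)) :=
    fun j _ => hr j (g j)
  rw [Finset.prod_congr rfl hfac, ← ENNReal.ofReal_prod_of_nonneg (fun i _ => hr0 _)]
  congr 1
  rw [← Fin.prod_univ_eq_prod_range (fun j => r (g j)) n]
  refine Finset.prod_congr rfl fun j _ => ?_
  rw [hg]
  simp only [j.isLt, dif_pos, Fin.eta]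

lemma count_eq (c : ℕ → Fin 3) {t : Fin 3} {v : ℕ} (hc : ∀ x, c x = t ↔ x = v) (n : ℕ) (ω : Ω) :
    #((Finset.range n).filter fun j => X j ω = v) = cnt (fun j : Fin n => c (X j.val ω)) t := by
  classical
  have h1 : (univ.filter fun j : Fin n => c (X j.val ω) = t)
      = univ.filter fun j : Fin n => X j.val ω = v :=
    Finset.filter_congr (fun j _ => by rw [hc])
  rw [cnt, h1, card_filter_val (fun j => X j ω = v)]

lemma meas_event (hXmeas : ∀ j, Measurable (X j))
    (hXindep : iIndepFun X μ)
    (c : ℕ → Fin 3) (r : Fin 3 → ℝ) (hr0 : ∀ t, 0 ≤ r t)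
    (hr : ∀ j t, μ {ω | c (X j ω) = t} = ENNReal.ofReal (r t))
    {u v : ℕ} (hc1 : ∀ x, c x = 1 ↔ x = u) (hc2 : ∀ x, c x = 2 ↔ x = v)
    (n : ℕ) (P : ℕ → ℕ → Prop) [∀ a b, Decidable (P a b)] :
    μ {ω | P (#((Finset.range n).filter fun j => X j ω = u))
            (#((Finset.range n).filter fun j => X j ω = v))}
      = ENNReal.ofReal (∑ f ∈ univ.filter (fun f : Fin n → Fin 3 => P (cnt f 1) (cnt f 2)),
          ∏ j, r (f j)) := by
  classical
  have hmeasC : ∀ f : Fin n → Fin 3, MeasurableSet {ω | ∀ j : Fin n, c (X j ω) = f j} := by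
    intro f
    have hEq : {ω | ∀ j : Fin n, c (X j ω) = f j}
        = ⋂ j : Fin n, (X j.val) ⁻¹' (c ⁻¹' {f j}) := by
      ext ω; simp [Set.mem_iInter]
    rw [hEq]
    exact MeasurableSet.iInter fun j => (hXmeas j.val) ((Set.to_countable _).measurableSet)
  have hcover : {ω | P (#((Finset.range n).filter fun j => X j ω = u))
            (#((Finset.range n).filter fun j => X j ω = v))}
      = ⋃ f ∈ univ.filter (fun f : Fin n → Fin 3 => P (cnt f 1) (cnt f 2)),
          {ω | ∀ j : Fin n, c (X j ω) = f j} := by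
    ext ω
    simp only [Set.mem_setOf_eq, Set.mem_iUnion, Finset.mem_filter, Finset.mem_univ, true_and,
      exists_prop]
    rw [count_eq c hc1 n ω, count_eq c hc2 n ω]
    constructor
    · intro h
      exact ⟨fun j => c (X j.val ω), h, fun j => rfl⟩
    · rintro ⟨f, hf, hcyl⟩
      have hfeq : (fun j : Fin n => c (X j.val ω)) = f := funext fun j => hcyl j
      rwa [hfeq]
  have hdisj : (↑(univ.filter (fun f : Fin n → Fin 3 => P (cnt f 1) (cnt f 2))) :
      Set (Fin n → Fin 3)).PairwiseDisjoint
        (fun f => {ω | ∀ j : Fin n, c (X j ω) = f j}) := by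
    intro f _ f' _ hne
    refine Set.disjoint_left.mpr fun ω hf hf' => hne (funext fun j => (hf j).symm.trans (hf' j))
  rw [hcover, measure_biUnion_finset hdisj (fun f _ => hmeasC f),
    ENNReal.ofReal_sum_of_nonneg (fun f _ => Finset.prod_nonneg fun j _ => hr0 _)]
  exact Finset.sum_congr rfl fun f _ => meas_cyl hXindep c r hr0 hr n f

/-- class function for a pair of values -/
def cpair (u v x : ℕ) : Fin 3 := if x = u then 1 else if x = v then 2 else 0

def rpair (pu pv : ℝ) : Fin 3 → ℝ := fun t => if t = 0 then 1 - pu - pv else if t = 1 then pu else pv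

lemma rpair_zero (a c : ℝ) : rpair a c 0 = 1 - a - c := rfl
lemma rpair_one (a c : ℝ) : rpair a c 1 = a := rfl
lemma rpair_two (a c : ℝ) : rpair a c 2 = c := rfl

lemma rpair_nonneg {a c : ℝ} (ha : 0 ≤ a) (hc : 0 ≤ c) (hac : a + c ≤ 1) :
    ∀ t, 0 ≤ rpair a c t := by
  intro t
  fin_cases t
  · show (0:ℝ) ≤ 1 - a - c
    linarith
  · exact ha
  · exact hc

lemma cpair_eq_one {u v x : ℕ} (huv : u ≠ v) : cpair u v x = 1 ↔ x = u := by
  unfold cpair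
  split_ifs with h1 h2
  · simp [h1]
  · exact ⟨fun h => absurd h (by decide), fun h => absurd h h1⟩
  · exact ⟨fun h => absurd h (by decide), fun h => absurd h h1⟩

lemma cpair_eq_two {u v x : ℕ} (huv : u ≠ v) : cpair u v x = 2 ↔ x = v := by
  unfold cpair
  split_ifs with h1 h2
  · exact ⟨fun h => absurd h (by decide), fun h => absurd (show u = v by omega) huv⟩
  · simp [h2]
  · exact ⟨fun h => absurd h (by decide), fun h => absurd h h2⟩

lemma cpair_eq_zero {u v x : ℕ} : cpair u v x = 0 ↔ (x ≠ u ∧ x ≠ v) := by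
  unfold cpair
  split_ifs with h1 h2
  · exact ⟨fun h => absurd h (by decide), fun h => absurd h1 h.1⟩
  · exact ⟨fun h => absurd h (by decide), fun h => absurd h2 h.2⟩
  · simp [h1, h2]

lemma meas_cpair (hXmeas : ∀ j, Measurable (X j)) {u v : ℕ} (huv : u ≠ v) {pu pv : ℝ}
    (hpu : 0 ≤ pu) (hpv : 0 ≤ pv)
    (hu : ∀ j, μ {ω | X j ω = u} = ENNReal.ofReal pu)
    (hv : ∀ j, μ {ω | X j ω = v} = ENNReal.ofReal pv) :
    ∀ j t, μ {ω | cpair u v (X j ω) = t} = ENNReal.ofReal (rpair pu pv t) := by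
  intro j t
  have hmu : {ω | X j ω = u} = X j ⁻¹' {u} := rfl
  have hmv : {ω | X j ω = v} = X j ⁻¹' {v} := rfl
  have hmeasu : MeasurableSet {ω | X j ω = u} := by
    rw [hmu]; exact (hXmeas j) ((Set.to_countable _).measurableSet)
  have hmeasv : MeasurableSet {ω | X j ω = v} := by
    rw [hmv]; exact (hXmeas j) ((Set.to_countable _).measurableSet)
  fin_cases t
  · -- t = 0
    show μ {ω | cpair u v (X j ω) = 0} = ENNReal.ofReal (rpair pu pv 0)
    have hset : {ω | cpair u v (X j ω) = 0} = ({ω | X j ω = u} ∪ {ω | X j ω = v})ᶜ := by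
      ext ω
      simp only [Set.mem_setOf_eq, Set.mem_compl_iff, Set.mem_union, cpair_eq_zero]
      tauto
    have hdisj : Disjoint {ω | X j ω = u} {ω | X j ω = v} :=
      Set.disjoint_left.mpr fun ω h1 h2 => huv ((h1 : X j ω = u) ▸ (h2 : X j ω = v) ▸ rfl)
    rw [hset, prob_compl_eq_one_sub (hmeasu.union hmeasv),
      measure_union hdisj hmeasv, hu j, hv j,
      ← ENNReal.ofReal_add hpu hpv, ← ENNReal.ofReal_one,
      ← ENNReal.ofReal_sub 1 (by positivity)]
    simp only [rpair]
    norm_num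
    rw [sub_sub]
  · -- t = 1
    show μ {ω | cpair u v (X j ω) = 1} = ENNReal.ofReal (rpair pu pv 1)
    have hset : {ω | cpair u v (X j ω) = 1} = {ω | X j ω = u} := by
      ext ω; simp [cpair_eq_one huv]
    rw [hset, hu j]
    simp [rpair]
  · -- t = 2
    show μ {ω | cpair u v (X j ω) = 2} = ENNReal.ofReal (rpair pu pv 2)
    have hset : {ω | cpair u v (X j ω) = 2} = {ω | X j ω = v} := by
      ext ω; simp [cpair_eq_two huv]
    rw [hset, hv j]
    simp [rpair]

end Meas

lemma tendsto_upper {C R : ℝ} (hC : 0 < C) (hR : 0 < R) :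
    Tendsto (fun n : ℕ => (1/(n:ℝ)) * Real.logb 2 (C * R ^ n)) atTop
      (nhds (Real.logb 2 R)) := by
  have h : ∀ᶠ n : ℕ in atTop, Real.logb 2 C * (1/(n:ℝ)) + Real.logb 2 R
      = (1/(n:ℝ)) * Real.logb 2 (C * R ^ n) := by
    filter_upwards [eventually_ge_atTop 1] with n hn
    have hn0 : (0:ℝ) < (n:ℝ) := by exact_mod_cast hn
    rw [Real.logb_mul (ne_of_gt hC) (by positivity), Real.logb_pow]
    field_simp
  have h2 : Tendsto (fun n : ℕ => Real.logb 2 C * (1/(n:ℝ)) + Real.logb 2 R) atTop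
      (nhds (Real.logb 2 C * 0 + Real.logb 2 R)) :=
    (tendsto_const_nhds.mul tendsto_one_div_atTop_nhds_zero_nat).add tendsto_const_nhds
  have h3 := h2.congr' h
  simpa using h3

lemma k_eventually {tstar : ℝ} (h0 : 0 < tstar) (h1 : 2*tstar < 1) :
    ∀ᶠ n : ℕ in atTop, 1 ≤ ⌊tstar * n⌋₊ ∧ 2 * ⌊tstar * n⌋₊ < n := by
  have hcast : Tendsto (fun n : ℕ => (n:ℝ)) atTop atTop := tendsto_natCast_atTop_atTop
  have hA : ∀ᶠ n : ℕ in atTop, (1:ℝ) ≤ tstar * n :=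
    (hcast.const_mul_atTop h0).eventually_ge_atTop 1
  have hB : ∀ᶠ n : ℕ in atTop, (1:ℝ) ≤ (1 - 2*tstar) * n :=
    (hcast.const_mul_atTop (by linarith)).eventually_ge_atTop 1
  filter_upwards [hA, hB] with n hn1 hn2
  constructor
  · exact Nat.le_floor (by exact_mod_cast hn1)
  · have hfl : (⌊tstar * n⌋₊ : ℝ) ≤ tstar * n := Nat.floor_le (by positivity)
    have : (2 * ⌊tstar * n⌋₊ : ℝ) < n := by nlinarith
    exact_mod_cast this

lemma tendsto_tau {tstar : ℝ} (h0 : 0 < tstar) :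
    Tendsto (fun n : ℕ => (⌊tstar * n⌋₊ : ℝ) / n) atTop (nhds tstar) := by
  refine tendsto_of_tendsto_of_tendsto_of_le_of_le'
    (g := fun n : ℕ => tstar - 1/(n:ℝ)) (h := fun _ : ℕ => tstar) ?_ tendsto_const_nhds ?_ ?_
  · have h2 := (tendsto_const_nhds :
      Tendsto (fun _ : ℕ => tstar) atTop (nhds tstar)).sub tendsto_one_div_atTop_nhds_zero_nat
    simpa using h2
  · filter_upwards [eventually_ge_atTop 1] with n hn
    have hn0 : (0:ℝ) < (n:ℝ) := by exact_mod_cast hn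
    rw [le_div_iff₀ hn0]
    have hfl := Nat.sub_one_lt_floor (tstar * (n:ℝ))
    have hexp : (tstar - 1/(n:ℝ)) * n = tstar * n - 1 := by field_simp
    linarith
  · filter_upwards [eventually_ge_atTop 1] with n hn
    have hn0 : (0:ℝ) < (n:ℝ) := by exact_mod_cast hn
    rw [div_le_iff₀ hn0]
    exact Nat.floor_le (by positivity)

lemma tendsto_logb_div : Tendsto (fun n : ℕ => Real.logb 2 ((n:ℝ)+1) * (1/(n:ℝ))) atTop (nhds 0) := by
  have hbase : Tendsto (fun x : ℝ => Real.log x / x) atTop (nhds 0) :=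
    Real.isLittleO_log_id_atTop.tendsto_div_nhds_zero
  have hshift : Tendsto (fun n : ℕ => (n:ℝ)+1) atTop atTop :=
    tendsto_atTop_add_const_right _ 1 tendsto_natCast_atTop_atTop
  have h4 : Tendsto (fun n : ℕ => Real.log ((n:ℝ)+1) / ((n:ℝ)+1)) atTop (nhds 0) :=
    hbase.comp hshift
  have hratio : Tendsto (fun n : ℕ => ((n:ℝ)+1)/(n:ℝ)) atTop (nhds 1) := by
    have h5 : Tendsto (fun n : ℕ => 1 + 1/(n:ℝ)) atTop (nhds (1 + 0)) :=
      tendsto_const_nhds.add tendsto_one_div_atTop_nhds_zero_nat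
    refine Tendsto.congr' ?_ (by simpa using h5)
    filter_upwards [eventually_ge_atTop 1] with n hn
    have hn0 : (n:ℝ) ≠ 0 := Nat.cast_ne_zero.mpr (by omega)
    field_simp
  have h6 : Tendsto (fun n : ℕ =>
      (Real.log ((n:ℝ)+1)/((n:ℝ)+1)) * (((n:ℝ)+1)/(n:ℝ)) * (1/Real.log 2)) atTop
      (nhds (0 * 1 * (1/Real.log 2))) := (h4.mul hratio).mul tendsto_const_nhds
  rw [show (0:ℝ) * 1 * (1/Real.log 2) = 0 by ring] at h6
  refine h6.congr' ?_
  filter_upwards [eventually_ge_atTop 1] with n hn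
  have hn0 : (n:ℝ) ≠ 0 := Nat.cast_ne_zero.mpr (by omega)
  have hn1 : ((n:ℝ)+1) ≠ 0 := by positivity
  rw [Real.logb]
  have hc : Real.log ((n:ℝ)+1)/((n:ℝ)+1) * (((n:ℝ)+1)/(n:ℝ)) = Real.log ((n:ℝ)+1) / n := by
    field_simp
  rw [hc]
  ring

lemma tendsto_lower {p1 p2 q tstar : ℝ} (hp1 : 0 < p1) (hp2 : 0 < p2) (hq : 0 < q)
    (hts : tstar = Real.sqrt (p1*p2) / (q + 2*Real.sqrt (p1*p2)))
    (k : ℕ → ℕ) (hk : ∀ n, k n = ⌊tstar * n⌋₊) :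
    Tendsto (fun n : ℕ => (1/(n:ℝ)) * Real.logb 2 ((((n:ℝ)+1)⁻¹)^2 *
        ((p1 * n / (k n : ℝ)) ^ k n * (p2 * n / (k n : ℝ)) ^ k n
          * (q * n / ((n - 2 * k n : ℕ) : ℝ)) ^ (n - 2 * k n)))) atTop
      (nhds (Real.logb 2 (q + 2 * Real.sqrt (p1 * p2)))) := by
  have hspos : 0 < Real.sqrt (p1*p2) := Real.sqrt_pos.mpr (by positivity)
  set s := Real.sqrt (p1*p2) with hsdef
  set ρ : ℝ := q + 2*s with hρdef
  have hρpos : 0 < ρ := by positivity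
  have ht0 : 0 < tstar := by rw [hts]; positivity
  have ht1 : 2*tstar < 1 := by
    rw [hts, mul_div_assoc']
    rw [div_lt_one hρpos]
    linarith
  set G : ℝ → ℝ := fun t => t * (Real.logb 2 p1 - Real.logb 2 t)
      + t * (Real.logb 2 p2 - Real.logb 2 t)
      + (1 - 2*t) * (Real.logb 2 q - Real.logb 2 (1 - 2*t)) with hGdef
  have htauk : Tendsto (fun n : ℕ => (k n : ℝ)/n) atTop (nhds tstar) := by
    refine (tendsto_tau ht0).congr fun n => ?_
    rw [hk n]
  have hGcont : ContinuousAt G tstar := by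
    have h1 : ContinuousAt (fun t : ℝ => Real.logb 2 t) tstar :=
      Real.continuousAt_logb (ne_of_gt ht0)
    have h2 : ContinuousAt (fun t : ℝ => Real.logb 2 (1 - 2*t)) tstar := by
      have h3 : ContinuousAt (fun y : ℝ => Real.logb 2 y) (1 - 2*tstar) :=
        Real.continuousAt_logb (ne_of_gt (by linarith))
      have h4 : ContinuousAt (fun t : ℝ => 1 - 2*t) tstar :=
        (continuous_const.sub (continuous_const.mul continuous_id)).continuousAt
      have h5 := ContinuousAt.comp (g := fun y : ℝ => Real.logb 2 y)
        (f := fun t : ℝ => 1 - 2*t) (x := tstar) h3 h4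
      exact h5
    rw [hGdef]
    exact ((continuousAt_id.mul (continuousAt_const.sub h1)).add
        (continuousAt_id.mul (continuousAt_const.sub h1))).add
      ((continuousAt_const.sub (continuousAt_const.mul continuousAt_id)).mul
        (continuousAt_const.sub h2))
  have hGval : G tstar = Real.logb 2 ρ := by
    have hL1 : Real.logb 2 tstar = Real.logb 2 s - Real.logb 2 ρ := by
      rw [hts]; exact Real.logb_div (ne_of_gt hspos) (ne_of_gt hρpos)
    have h12 : (1:ℝ) - 2*tstar = q/ρ := by
      rw [hts]
      field_simp
      linear_combination hρdef
    have hL2 : Real.logb 2 (1 - 2*tstar) = Real.logb 2 q - Real.logb 2 ρ := by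
      rw [h12, Real.logb_div (ne_of_gt hq) (ne_of_gt hρpos)]
    have hL3 : Real.logb 2 p1 + Real.logb 2 p2 = 2 * Real.logb 2 s := by
      rw [← Real.logb_mul (ne_of_gt hp1) (ne_of_gt hp2)]
      rw [show p1 * p2 = s^2 by rw [hsdef]; exact (Real.sq_sqrt (by positivity)).symm]
      rw [Real.logb_pow]
      norm_num
    rw [hGdef]
    simp only []
    rw [hL1, hL2]
    linear_combination tstar * hL3
  have hmain : Tendsto (fun n : ℕ => G ((k n : ℝ)/n)
      + (-2) * (Real.logb 2 ((n:ℝ)+1) * (1/(n:ℝ)))) atTop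
      (nhds (Real.logb 2 ρ)) := by
    have h1 := (hGcont.tendsto.comp htauk).add (tendsto_logb_div.const_mul (-2))
    rw [hGval] at h1
    simpa using h1
  refine hmain.congr' ?_
  filter_upwards [k_eventually ht0 ht1, eventually_ge_atTop 1] with n hreg hn1
  rw [← hk n] at hreg
  obtain ⟨hk1, h2k⟩ := hreg
  have hnR : (0:ℝ) < n := by exact_mod_cast hn1
  have hkR : (0:ℝ) < (k n : ℝ) := by exact_mod_cast hk1
  set m : ℕ := n - 2 * k n with hmdef
  have hmpos : 0 < m := by omega
  have hmR : (0:ℝ) < (m:ℝ) := by exact_mod_cast hmpos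
  have hmcast : (m:ℝ) = (n:ℝ) - 2*(k n : ℝ) := by
    rw [hmdef]; push_cast [Nat.cast_sub (by omega : 2 * k n ≤ n)]; ring
  set τ : ℝ := (k n : ℝ)/n with hτdef
  have hτpos : 0 < τ := div_pos hkR hnR
  have hτlt : 2*τ < 1 := by
    rw [hτdef, mul_div_assoc']
    rw [div_lt_one hnR]
    exact_mod_cast h2k
  have hτhalf : (1:ℝ) - 2*τ = (m:ℝ)/n := by
    rw [hmcast, hτdef]; field_simp
  have hb1 : p1 * n / (k n : ℝ) = p1 / τ := by
    rw [hτdef]; field_simp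
  have hb2 : p2 * n / (k n : ℝ) = p2 / τ := by
    rw [hτdef]; field_simp
  have hd1 : q * n / (m:ℝ) = q / (1 - 2*τ) := by
    rw [hτhalf]; field_simp
  have hknτ : (k n : ℝ) = τ * n := by rw [hτdef]; field_simp
  have hmτ : (m : ℝ) = (1 - 2*τ) * n := by rw [hτhalf]; field_simp
  have h1m2τ : 0 < 1 - 2*τ := by linarith
  rw [hb1, hb2, hd1]
  have hBne : (p1 / τ) ^ k n ≠ 0 := by positivity
  have hCne : (p2 / τ) ^ k n ≠ 0 := by positivity
  have hDne : (q / (1 - 2*τ)) ^ m ≠ 0 := by positivity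
  have hAne : ((((n:ℝ)+1)⁻¹)) ^ 2 ≠ 0 := by positivity
  rw [Real.logb_mul hAne (by exact mul_ne_zero (mul_ne_zero hBne hCne) hDne),
    Real.logb_mul (mul_ne_zero hBne hCne) hDne,
    Real.logb_mul hBne hCne,
    Real.logb_pow, Real.logb_pow, Real.logb_pow, Real.logb_pow, Real.logb_inv,
    Real.logb_div (ne_of_gt hp1) (ne_of_gt hτpos),
    Real.logb_div (ne_of_gt hp2) (ne_of_gt hτpos),
    Real.logb_div (ne_of_gt hq) (ne_of_gt h1m2τ)]
  rw [hGdef]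
  simp only []
  rw [hknτ, hmτ]
  field_simp
  ring

end DetExp

theorem detection_error_exponent (b : ℕ) (hb : 1 ≤ b) (p : ℕ → ℝ)
    (hp : IsSensorDist b p)
    {Ω : Type*} [MeasurableSpace Ω] (μ : Measure Ω) [IsProbabilityMeasure μ]
    (X : ℕ → Ω → ℕ) (hXmeas : ∀ j, Measurable (X j))
    (hXindep : iIndepFun X μ)
    (hXdist : ∀ j, ∀ k ≤ 2 * b, μ {ω | X j ω = k} = ENNReal.ofReal (p k))
    (N : ℕ → ℕ → Ω → ℕ)
    (hN : ∀ n k ω, N n k ω = ((Finset.range n).filter fun j => X j ω = k).card)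
    (e : ℕ → ℝ)
    (he : ∀ n, e n =
      (μ {ω | ¬ (0 < N n 0 ω ∧ ∀ i < 2 * b, N n i ω < N n (i + 1) ω)}).toReal) :
    Tendsto (fun n : ℕ => (1 / (n : ℝ)) * Real.logb 2 (e n)) atTop
      (nhds (Real.logb 2 (1 - dmin b p ^ 2))) := by
  classical
  open DetExp in
  obtain ⟨hp0, hpm, hpsum⟩ := hp
  have hppos : ∀ k, k ≤ 2 * b → 0 < p k := by
    intro k
    induction k with
    | zero => exact fun _ => hp0
    | succ k ih => exact fun hk => lt_trans (ih (by omega)) (hpm k (by omega))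
  have hqpos : ∀ i, i + 1 ≤ 2 * b → 0 < 1 - p i - p (i + 1) := by
    intro i hi
    have hsub : ({i, i + 1} : Finset ℕ) ⊆ Finset.range (2 * b + 1) := by
      intro x hx
      simp only [Finset.mem_insert, Finset.mem_singleton] at hx
      rcases hx with rfl | rfl <;> simp only [Finset.mem_range] <;> omega
    have hsplit := Finset.sum_sdiff (f := p) hsub
    have hpair : ∑ x ∈ ({i, i + 1} : Finset ℕ), p x = p i + p (i + 1) :=
      Finset.sum_pair (by omega)
    have hpos : 0 < ∑ x ∈ Finset.range (2 * b + 1) \ {i, i + 1}, p x := by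
      refine Finset.sum_pos (fun x hx => ?_) ?_
      · have hx' := (Finset.mem_sdiff.mp hx).1
        exact hppos x (by simpa [Finset.mem_range, Nat.lt_succ_iff] using hx')
      · rw [← Finset.card_pos, Finset.card_sdiff_of_subset hsub, Finset.card_range,
          Finset.card_pair (by omega)]
        omega
    rw [hpair, hpsum] at hsplit
    linarith
  have hd0 : dvec p 0 = Real.sqrt (p 0) := if_pos rfl
  have hrho0 : 1 - dvec p 0 ^ 2 = 1 - p 0 := by
    rw [hd0, Real.sq_sqrt hp0.le]
  have hrho : ∀ i, 1 ≤ i → i ≤ 2 * b → 1 - dvec p i ^ 2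
      = (1 - p (i - 1) - p i) + 2 * Real.sqrt (p (i - 1) * p i) := by
    intro i h1 h2
    rw [dvec, if_neg (by omega : i ≠ 0),
      Real.sqrt_mul (hppos (i - 1) (by omega)).le]
    have ha := Real.sq_sqrt (hppos (i - 1) (by omega)).le
    have hb' := Real.sq_sqrt (hppos i h2).le
    linear_combination - ha - hb'
  have hdpos : ∀ i ∈ Finset.range (2 * b + 1), 0 < dvec p i := by
    intro i hi
    rw [Finset.mem_range] at hi
    rcases Nat.eq_zero_or_pos i with rfl | hipos
    · rw [hd0]; exact Real.sqrt_pos.mpr hp0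
    · rw [dvec, if_neg (by omega : i ≠ 0), sub_pos]
      apply Real.sqrt_lt_sqrt (hppos (i - 1) (by omega)).le
      have hpmono := hpm (i - 1) (by omega)
      rwa [Nat.sub_add_cancel hipos] at hpmono
  have hne : (Finset.range (2 * b + 1)).Nonempty := Finset.nonempty_range_iff.mpr (by omega)
  have hdmin_unfold : dmin b p = (Finset.range (2 * b + 1)).inf' hne (dvec p) := rfl
  have hdminpos : 0 < dmin b p := by
    rw [hdmin_unfold, Finset.lt_inf'_iff]
    exact hdpos
  have hdminle : ∀ i ∈ Finset.range (2 * b + 1), dmin b p ≤ dvec p i := by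
    intro i hi
    rw [hdmin_unfold]
    exact Finset.inf'_le _ hi
  set R : ℝ := 1 - dmin b p ^ 2 with hRdef
  have hp0lt1 : p 0 < 1 := by
    have h1 := hqpos 0 (by omega)
    have h2 := hppos 1 (by omega)
    linarith
  have hRpos : 0 < R := by
    have h1 : dmin b p ≤ dvec p 0 := hdminle 0 (by simp)
    have h2 : dmin b p ^ 2 ≤ dvec p 0 ^ 2 := pow_le_pow_left₀ hdminpos.le h1 2
    rw [hRdef]
    have h3 := hrho0
    nlinarith
  have hRub : ∀ i ∈ Finset.range (2 * b + 1), 1 - dvec p i ^ 2 ≤ R := by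
    intro i hi
    have h1 := hdminle i hi
    have h2 : dmin b p ^ 2 ≤ dvec p i ^ 2 := pow_le_pow_left₀ hdminpos.le h1 2
    rw [hRdef]; linarith
  have hCpos : (0:ℝ) < ((2 * b + 1 : ℕ) : ℝ) := by
    exact_mod_cast Nat.succ_pos (2 * b)
  -- measure of the zero event
  have hB0 : ∀ n, μ {ω | N n 0 ω = 0} = ENNReal.ofReal ((1 - p 0) ^ n) := by
    intro n
    have hrmeas := meas_cpair (μ := μ) hXmeas (by omega : (0:ℕ) ≠ 1)
      (hppos 0 (by omega)).le (hppos 1 (by omega)).le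
      (fun j => hXdist j 0 (by omega)) (fun j => hXdist j 1 (by omega))
    have hrnn : ∀ t, 0 ≤ rpair (p 0) (p 1) t :=
      rpair_nonneg (hppos 0 (by omega)).le (hppos 1 (by omega)).le
        (by have := hqpos 0 (by omega); linarith)
    have hset : {ω | N n 0 ω = 0}
        = {ω | (fun a b : ℕ => a = 0) (#((Finset.range n).filter fun j => X j ω = 0))
            (#((Finset.range n).filter fun j => X j ω = 1))} := by
      ext ω; simp [hN]
    rw [hset, meas_event hXmeas hXindep _ _ hrnn hrmeas
        (fun x => cpair_eq_one (by omega)) (fun x => cpair_eq_two (by omega)) n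
        (fun a b => a = 0)]
    have hfeq : (univ.filter fun f : Fin n → Fin 3 =>
          (fun a b : ℕ => a = 0) (cnt f 1) (cnt f 2))
        = univ.filter (fun f : Fin n → Fin 3 => cnt f 1 = 0) :=
      Finset.filter_congr (fun f _ => Iff.rfl)
    rw [hfeq, sum_zero_eq, rpair_zero, rpair_two]
    congr 1
    ring
  -- measure bound for pair events
  have hBpair : ∀ n, ∀ i, i + 1 ≤ 2 * b →
      μ {ω | N n (i + 1) ω ≤ N n i ω}
        ≤ ENNReal.ofReal ((1 - dvec p (i + 1) ^ 2) ^ n) := by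
    intro n i hi
    have hrmeas := meas_cpair (μ := μ) hXmeas (by omega : i ≠ i + 1)
      (hppos i (by omega)).le (hppos (i + 1) hi).le
      (fun j => hXdist j i (by omega)) (fun j => hXdist j (i + 1) hi)
    have hrnn : ∀ t, 0 ≤ rpair (p i) (p (i + 1)) t :=
      rpair_nonneg (hppos i (by omega)).le (hppos (i + 1) hi).le
        (by have := hqpos i hi; linarith)
    have hset : {ω | N n (i + 1) ω ≤ N n i ω}
        = {ω | (fun a b : ℕ => b ≤ a) (#((Finset.range n).filter fun j => X j ω = i))
            (#((Finset.range n).filter fun j => X j ω = (i + 1)))} := by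
      ext ω; simp [hN]
    rw [hset, meas_event hXmeas hXindep _ _ hrnn hrmeas
        (fun x => cpair_eq_one (by omega)) (fun x => cpair_eq_two (by omega)) n
        (fun a b => b ≤ a)]
    have hfeq : (univ.filter fun f : Fin n → Fin 3 =>
          (fun a b : ℕ => b ≤ a) (cnt f 1) (cnt f 2))
        = univ.filter (fun f : Fin n → Fin 3 => cnt f 2 ≤ cnt f 1) :=
      Finset.filter_congr (fun f _ => Iff.rfl)
    rw [hfeq]
    refine ENNReal.ofReal_le_ofReal ?_
    have h1 := sum_pair_le (n := n) (rpair (p i) (p (i + 1))) hrnn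
      (by rw [rpair_one, rpair_two]; exact (hpm i (by omega)).le)
    rw [rpair_zero, rpair_one, rpair_two] at h1
    have h2 : (1 : ℝ) - p i - p (i + 1) + 2 * Real.sqrt (p i * p (i + 1))
        = 1 - dvec p (i + 1) ^ 2 := by
      rw [hrho (i + 1) (by omega) (by omega), Nat.add_sub_cancel]
    rw [← h2]
    exact h1
  -- global upper bound
  have hupper : ∀ n, e n ≤ ((2 * b + 1 : ℕ) : ℝ) * R ^ n := by
    intro n
    have hsub : {ω | ¬ (0 < N n 0 ω ∧ ∀ i < 2 * b, N n i ω < N n (i + 1) ω)}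
        ⊆ {ω | N n 0 ω = 0}
          ∪ ⋃ i ∈ Finset.range (2 * b), {ω | N n (i + 1) ω ≤ N n i ω} := by
      intro ω hω
      simp only [Set.mem_setOf_eq] at hω
      push_neg at hω
      by_cases h0 : N n 0 ω = 0
      · exact Set.mem_union_left _ h0
      · obtain ⟨i, hi, hle⟩ := hω (Nat.pos_of_ne_zero h0)
        refine Set.mem_union_right _ ?_
        simp only [Set.mem_iUnion, Finset.mem_range, Set.mem_setOf_eq]
        exact ⟨i, hi, hle⟩
    have hRn0 : (0:ℝ) ≤ R ^ n := by positivity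
    have h1 : ENNReal.ofReal ((1 - p 0) ^ n) ≤ ENNReal.ofReal (R ^ n) := by
      refine ENNReal.ofReal_le_ofReal (pow_le_pow_left₀ (by linarith) ?_ n)
      rw [← hrho0]
      exact hRub 0 (by simp)
    have hRn : ∀ i ∈ Finset.range (2 * b),
        ENNReal.ofReal ((1 - dvec p (i + 1) ^ 2) ^ n) ≤ ENNReal.ofReal (R ^ n) := by
      intro i hi
      rw [Finset.mem_range] at hi
      refine ENNReal.ofReal_le_ofReal (pow_le_pow_left₀ ?_ ?_ n)
      · rw [hrho (i + 1) (by omega) (by omega), Nat.add_sub_cancel]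
        have h2 := hqpos i (by omega)
        have h3 := Real.sqrt_nonneg (p i * p (i + 1))
        linarith
      · exact hRub (i + 1) (by simp only [Finset.mem_range]; omega)
    have htotal : μ {ω | ¬ (0 < N n 0 ω ∧ ∀ i < 2 * b, N n i ω < N n (i + 1) ω)}
        ≤ (2 * b + 1) • ENNReal.ofReal (R ^ n) := by
      refine le_trans (measure_mono hsub) (le_trans (measure_union_le _ _) ?_)
      have hA : μ {ω | N n 0 ω = 0} ≤ ENNReal.ofReal (R ^ n) :=
        le_trans (le_of_eq (hB0 n)) h1
      have hBb : μ (⋃ i ∈ Finset.range (2 * b), {ω | N n (i + 1) ω ≤ N n i ω})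
          ≤ (2 * b) • ENNReal.ofReal (R ^ n) := by
        refine le_trans (measure_biUnion_finset_le _ _) ?_
        have := Finset.sum_le_card_nsmul (Finset.range (2 * b))
          (fun i => μ {ω | N n (i + 1) ω ≤ N n i ω}) (ENNReal.ofReal (R ^ n))
          (fun i hi => le_trans (hBpair n i (by rw [Finset.mem_range] at hi; omega))
            (hRn i hi))
        simpa using this
      calc μ {ω | N n 0 ω = 0}
            + μ (⋃ i ∈ Finset.range (2 * b), {ω | N n (i + 1) ω ≤ N n i ω})
          ≤ ENNReal.ofReal (R ^ n) + (2 * b) • ENNReal.ofReal (R ^ n) := add_le_add hA hBb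
        _ = (2 * b + 1) • ENNReal.ofReal (R ^ n) := by
            rw [add_comm, ← succ_nsmul]
    rw [he n]
    have hfin : ((2 * b + 1) • ENNReal.ofReal (R ^ n)) ≠ ⊤ := by
      rw [nsmul_eq_mul]
      exact ENNReal.mul_ne_top (ENNReal.natCast_ne_top _) ENNReal.ofReal_ne_top
    calc (μ {ω | ¬ (0 < N n 0 ω ∧ ∀ i < 2 * b, N n i ω < N n (i + 1) ω)}).toReal
        ≤ ((2 * b + 1) • ENNReal.ofReal (R ^ n)).toReal := ENNReal.toReal_mono hfin htotal
      _ = ((2 * b + 1 : ℕ) : ℝ) * R ^ n := by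
          rw [nsmul_eq_mul, ENNReal.toReal_mul, ENNReal.toReal_natCast,
            ENNReal.toReal_ofReal hRn0]
  have hupperT : Tendsto (fun n : ℕ =>
      (1/(n:ℝ)) * Real.logb 2 (((2 * b + 1 : ℕ) : ℝ) * R ^ n)) atTop
      (nhds (Real.logb 2 R)) := tendsto_upper hCpos hRpos
  obtain ⟨i0, hi0mem, hi0⟩ := Finset.exists_mem_eq_inf' hne (dvec p)
  have hi0le : i0 ≤ 2 * b := by
    have := Finset.mem_range.mp hi0mem; omega
  have hdmin_eq : dmin b p = dvec p i0 := by rw [hdmin_unfold]; exact hi0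
  have hgoal : Tendsto (fun n : ℕ => (1 / (n : ℝ)) * Real.logb 2 (e n)) atTop
      (nhds (Real.logb 2 R)) := by
    rcases Nat.eq_zero_or_pos i0 with hz | hipos
    · -- minimizer at 0
      subst hz
      have hR0 : R = 1 - p 0 := by
        rw [hRdef, hdmin_eq, ← hrho0]
      have hlow : ∀ n, R ^ n ≤ e n := by
        intro n
        have hsubset : {ω | N n 0 ω = 0}
            ⊆ {ω | ¬ (0 < N n 0 ω ∧ ∀ i < 2 * b, N n i ω < N n (i + 1) ω)} := by
          intro ω h0
          simp only [Set.mem_setOf_eq] at h0 ⊢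
          intro hcon
          rw [h0] at hcon
          exact absurd hcon.1 (lt_irrefl 0)
        have h1 : ENNReal.ofReal ((1 - p 0) ^ n)
            ≤ μ {ω | ¬ (0 < N n 0 ω ∧ ∀ i < 2 * b, N n i ω < N n (i + 1) ω)} :=
          le_trans (le_of_eq (hB0 n).symm) (measure_mono hsubset)
        rw [he n, hR0]
        calc (1 - p 0) ^ n = (ENNReal.ofReal ((1 - p 0) ^ n)).toReal :=
              (ENNReal.toReal_ofReal (pow_nonneg (by linarith) n)).symm
          _ ≤ _ := ENNReal.toReal_mono (measure_ne_top μ _) h1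
      have hgl : Tendsto (fun n : ℕ => (1/(n:ℝ)) * Real.logb 2 ((1:ℝ) * R ^ n)) atTop
          (nhds (Real.logb 2 R)) := tendsto_upper one_pos hRpos
      refine tendsto_of_tendsto_of_tendsto_of_le_of_le' hgl hupperT ?_ ?_
      · refine Eventually.of_forall fun n => ?_
        rw [one_mul]
        have h2 : 0 < R ^ n := by positivity
        refine mul_le_mul_of_nonneg_left ?_ (by positivity)
        exact (Real.logb_le_logb (by norm_num) h2 (lt_of_lt_of_le h2 (hlow n))).mpr (hlow n)
      · refine Eventually.of_forall fun n => ?_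
        have h2 : 0 < R ^ n := by positivity
        have h3 : 0 < e n := lt_of_lt_of_le h2 (hlow n)
        refine mul_le_mul_of_nonneg_left ?_ (by positivity)
        exact (Real.logb_le_logb (by norm_num) h3
          (mul_pos hCpos (by positivity))).mpr (hupper n)
    · -- minimizer at i+1
      obtain ⟨i, rfl⟩ : ∃ i, i0 = i + 1 := ⟨i0 - 1, by omega⟩
      have hile : i + 1 ≤ 2 * b := hi0le
      have hp1 : 0 < p i := hppos i (by omega)
      have hp2 : 0 < p (i + 1) := hppos (i + 1) hile
      have hq : 0 < 1 - p i - p (i + 1) := hqpos i hile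
      set q : ℝ := 1 - p i - p (i + 1) with hqdef
      have hspos : 0 < Real.sqrt (p i * p (i + 1)) := Real.sqrt_pos.mpr (by positivity)
      have hRrho : R = q + 2 * Real.sqrt (p i * p (i + 1)) := by
        rw [hRdef, hdmin_eq]
        have h2 := hrho (i + 1) (by omega) hile
        rw [Nat.add_sub_cancel] at h2
        rw [h2, hqdef]
      set tstar : ℝ := Real.sqrt (p i * p (i + 1))
          / (q + 2 * Real.sqrt (p i * p (i + 1))) with htsdef
      have ht0 : 0 < tstar := by rw [htsdef]; positivity
      have ht1 : 2 * tstar < 1 := by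
        rw [htsdef, mul_div_assoc', div_lt_one (by positivity)]
        linarith
      set kf : ℕ → ℕ := fun n => ⌊tstar * n⌋₊ with hkf
      have hlowT := tendsto_lower hp1 hp2 hq htsdef kf (fun n => rfl)
      rw [← hRrho] at hlowT
      have hev : ∀ᶠ n : ℕ in atTop,
          (0 < (((n:ℝ)+1)⁻¹)^2 * ((p i * n / (kf n : ℝ)) ^ kf n
              * (p (i + 1) * n / (kf n : ℝ)) ^ kf n
              * (q * n / ((n - 2 * kf n : ℕ) : ℝ)) ^ (n - 2 * kf n)))
          ∧ (((n:ℝ)+1)⁻¹)^2 * ((p i * n / (kf n : ℝ)) ^ kf n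
              * (p (i + 1) * n / (kf n : ℝ)) ^ kf n
              * (q * n / ((n - 2 * kf n : ℕ) : ℝ)) ^ (n - 2 * kf n)) ≤ e n := by
        filter_upwards [k_eventually ht0 ht1, eventually_ge_atTop 1] with n hreg hn1
        have hk1 : 1 ≤ kf n := hreg.1
        have h2k : 2 * kf n < n := hreg.2
        have hnR : (0:ℝ) < n := by exact_mod_cast hn1
        have hkR : (0:ℝ) < (kf n : ℝ) := by exact_mod_cast hk1
        have hmN : 0 < n - 2 * kf n := by omega
        have hmR : (0:ℝ) < ((n - 2 * kf n : ℕ) : ℝ) := by exact_mod_cast hmN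
        have hApos : (0:ℝ) < (((n:ℝ)+1)⁻¹)^2 := by positivity
        have hBpos : (0:ℝ) < (p i * n / (kf n : ℝ)) ^ kf n :=
          pow_pos (div_pos (by positivity) hkR) _
        have hCpos' : (0:ℝ) < (p (i + 1) * n / (kf n : ℝ)) ^ kf n :=
          pow_pos (div_pos (by positivity) hkR) _
        have hDpos : (0:ℝ) < (q * n / ((n - 2 * kf n : ℕ) : ℝ)) ^ (n - 2 * kf n) :=
          pow_pos (div_pos (by positivity) hmR) _
        refine ⟨by positivity, ?_⟩
        -- measure of the equal-count event
        have hrmeas := meas_cpair (μ := μ) hXmeas (by omega : i ≠ i + 1)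
          hp1.le hp2.le
          (fun j => hXdist j i (by omega)) (fun j => hXdist j (i + 1) hile)
        have hrnn : ∀ t, 0 ≤ rpair (p i) (p (i + 1)) t :=
          rpair_nonneg hp1.le hp2.le (by linarith)
        have hset : {ω | N n i ω = kf n ∧ N n (i + 1) ω = kf n}
            = {ω | (fun a b : ℕ => a = kf n ∧ b = kf n)
                (#((Finset.range n).filter fun j => X j ω = i))
                (#((Finset.range n).filter fun j => X j ω = (i + 1)))} := by
          ext ω; simp [hN]
        have hμev := meas_event hXmeas hXindep _ _ hrnn hrmeas
          (fun x => cpair_eq_one (by omega)) (fun x => cpair_eq_two (by omega)) n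
          (fun a b => a = kf n ∧ b = kf n)
        rw [← hset] at hμev
        have hfeq : (univ.filter fun f : Fin n → Fin 3 =>
              (fun a b : ℕ => a = kf n ∧ b = kf n) (cnt f 1) (cnt f 2))
            = univ.filter (fun f : Fin n → Fin 3 => cnt f 1 = kf n ∧ cnt f 2 = kf n) :=
          Finset.filter_congr (fun f _ => Iff.rfl)
        rw [hfeq] at hμev
        have hconst2 : ∀ f ∈ univ.filter
              (fun f : Fin n → Fin 3 => cnt f 1 = kf n ∧ cnt f 2 = kf n),
            ∏ j, rpair (p i) (p (i + 1)) (f j)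
              = q ^ (n - 2 * kf n) * p i ^ kf n * p (i + 1) ^ kf n := by
          intro f hf
          simp only [Finset.mem_filter, Finset.mem_univ, true_and] at hf
          rw [prod_comp_cnt, Fin.prod_univ_three, hf.1, hf.2]
          have h0 : cnt f 0 = n - 2 * kf n := by
            have := cnt_sum f; omega
          rw [h0, rpair_zero, rpair_one, rpair_two, hqdef]
        have hsum2 : ∑ f ∈ univ.filter
              (fun f : Fin n → Fin 3 => cnt f 1 = kf n ∧ cnt f 2 = kf n),
            ∏ j, rpair (p i) (p (i + 1)) (f j)
            = ((n.choose (kf n) * (n - kf n).choose (kf n) : ℕ) : ℝ)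
              * (p i ^ kf n * p (i + 1) ^ kf n * q ^ (n - 2 * kf n)) := by
          rw [Finset.sum_congr rfl hconst2, Finset.sum_const,
            count_formula (by omega), nsmul_eq_mul]
          ring
        rw [hsum2] at hμev
        have hsubev : {ω | N n i ω = kf n ∧ N n (i + 1) ω = kf n}
            ⊆ {ω | ¬ (0 < N n 0 ω ∧ ∀ i' < 2 * b, N n i' ω < N n (i' + 1) ω)} := by
          intro ω hω
          simp only [Set.mem_setOf_eq] at hω ⊢
          rintro ⟨-, hinc⟩
          have hlt := hinc i (by omega)
          omega
        have hmul := multinomial_lower (n := n) (k := kf n) (by omega) hk1 h2k hp1 hp2 hq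
        calc (((n:ℝ)+1)⁻¹)^2 * ((p i * n / (kf n : ℝ)) ^ kf n
              * (p (i + 1) * n / (kf n : ℝ)) ^ kf n
              * (q * n / ((n - 2 * kf n : ℕ) : ℝ)) ^ (n - 2 * kf n))
            ≤ ((n.choose (kf n) * (n - kf n).choose (kf n) : ℕ) : ℝ)
              * (p i ^ kf n * p (i + 1) ^ kf n * q ^ (n - 2 * kf n)) := hmul
          _ = (ENNReal.ofReal (((n.choose (kf n) * (n - kf n).choose (kf n) : ℕ) : ℝ)
              * (p i ^ kf n * p (i + 1) ^ kf n * q ^ (n - 2 * kf n)))).toReal :=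
              (ENNReal.toReal_ofReal (by positivity)).symm
          _ ≤ (μ {ω | ¬ (0 < N n 0 ω ∧ ∀ i' < 2 * b, N n i' ω < N n (i' + 1) ω)}).toReal := by
              refine ENNReal.toReal_mono (measure_ne_top μ _) ?_
              rw [← hμev]
              exact measure_mono hsubev
          _ = e n := (he n).symm
      refine tendsto_of_tendsto_of_tendsto_of_le_of_le' hlowT hupperT ?_ ?_
      · filter_upwards [hev] with n hn
        obtain ⟨hLpos, hLle⟩ := hn
        refine mul_le_mul_of_nonneg_left ?_ (by positivity)
        exact (Real.logb_le_logb (by norm_num) hLpos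
          (lt_of_lt_of_le hLpos hLle)).mpr hLle
      · filter_upwards [hev] with n hn
        obtain ⟨hLpos, hLle⟩ := hn
        have h3 : 0 < e n := lt_of_lt_of_le hLpos hLle
        refine mul_le_mul_of_nonneg_left ?_ (by positivity)
        exact (Real.logb_le_logb (by norm_num) h3
          (mul_pos hCpos (by positivity))).mpr (hupper n)
  exact hgoal
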